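/- Let G=(V,E) be a connected finite graph with positive edge costs, let α ≥ 1, and let (U, V∖U) be an α-approximate minimum cut of G. Then there exist subsets S, T ⊆ V with |S| ≤ ⌊2α⌋+1 and |T| ≤ ⌊2α⌋+1 such that (U, V∖U) is the unique minimum (S,T)-terminal cut of G. -/

import Mathlib

open Finset

variable {V : Type*} [Fintype V] [DecidableEq V]

/- The value of the cut `(U, Uᶜ)`: total cost of edges with exactly one endpoint in `U`. -/
open Classical in
noncomputable def cutVal (G : SimpleGraph V) (c : V → V → ℝ) (U : Finset V) : ℝ :=
  ∑ u ∈ U, ∑ v ∈ Uᶜ, if G.Adj u v then c u v else 0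

/-- `(X, Xᶜ)` is an `(S,T)`-terminal cut: `S ⊆ X ⊆ Tᶜ`. -/
def IsTerminalCut (S T X : Finset V) : Prop := S ⊆ X ∧ X ⊆ Tᶜ

/-- `(X, Xᶜ)` is a minimum `(S,T)`-terminal cut. -/
def IsMinTerminalCut (G : SimpleGraph V) (c : V → V → ℝ) (S T X : Finset V) : Prop :=
  IsTerminalCut S T X ∧ ∀ Y : Finset V, IsTerminalCut S T Y → cutVal G c X ≤ cutVal G c Y

/-- `(X, Xᶜ)` is the unique minimum `(S,T)`-terminal cut. -/
def IsUniqueMinTerminalCut (G : SimpleGraph V) (c : V → V → ℝ) (S T X : Finset V) : Prop :=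
  IsMinTerminalCut G c S T X ∧ ∀ Y : Finset V, IsMinTerminalCut G c S T Y → Y = X

section ApproxCutAux

set_option linter.unusedSectionVars false
set_option linter.unusedVariables false
set_option maxHeartbeats 1000000

noncomputable def cvv (f : V → V → ℝ) (X : Finset V) : ℝ := ∑ u ∈ X, ∑ v ∈ Xᶜ, f u v

noncomputable def cvs (f : V → V → ℝ) (X : Finset V) : ℝ :=
  ∑ u, ∑ v, if ¬((u ∈ X) ↔ (v ∈ X)) then f u v else 0

lemma cvv_eq_univ (f : V → V → ℝ) (X : Finset V) :
    cvv f X = ∑ u, ∑ v, if u ∈ X ∧ v ∉ X then f u v else 0 := by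
  have h1 : ∀ u, (∑ v, if u ∈ X ∧ v ∉ X then f u v else 0)
      = if u ∈ X then ∑ v ∈ Xᶜ, f u v else 0 := by
    intro u
    by_cases hu : u ∈ X
    · simp only [hu, true_and, if_true]
      rw [← Finset.sum_filter]
      apply Finset.sum_congr _ (fun _ _ => rfl)
      ext v; simp
    · simp [hu]
  simp only [h1]
  rw [← Finset.sum_filter]
  unfold cvv
  apply Finset.sum_congr _ (fun _ _ => rfl)
  ext u; simp

lemma cvv_nonneg (f : V → V → ℝ) (hf : ∀ u v, 0 ≤ f u v) (X : Finset V) : 0 ≤ cvv f X := by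
  apply Finset.sum_nonneg; intro u _; apply Finset.sum_nonneg; intro v _; exact hf u v

lemma cvv_empty (f : V → V → ℝ) : cvv f ∅ = 0 := by simp [cvv]


lemma cvs_eq_two_cvv (f : V → V → ℝ) (hfs : ∀ u v, f u v = f v u) (X : Finset V) :
    cvs f X = 2 * cvv f X := by
  have key : ∀ u v : V, (if ¬((u ∈ X) ↔ (v ∈ X)) then f u v else 0)
      = (if u ∈ X ∧ v ∉ X then f u v else 0) + (if v ∈ X ∧ u ∉ X then f u v else 0) := by
    intro u v
    by_cases hu : u ∈ X <;> by_cases hv : v ∈ X <;> simp [hu, hv]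
  unfold cvs
  simp only [key]
  rw [Finset.sum_congr rfl (fun u _ => Finset.sum_add_distrib), Finset.sum_add_distrib]
  have h1 : (∑ u, ∑ v, if u ∈ X ∧ v ∉ X then f u v else 0) = cvv f X := (cvv_eq_univ f X).symm
  have h2 : (∑ u, ∑ v, if v ∈ X ∧ u ∉ X then f u v else 0) = cvv f X := by
    rw [Finset.sum_comm, cvv_eq_univ]
    apply Finset.sum_congr rfl; intro v _
    apply Finset.sum_congr rfl; intro u _
    by_cases h : v ∈ X ∧ u ∉ X <;> simp [h, hfs u v]
  rw [h1, h2]; ring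

lemma cvv_compl (f : V → V → ℝ) (hfs : ∀ u v, f u v = f v u) (X : Finset V) :
    cvv f Xᶜ = cvv f X := by
  have h : cvs f Xᶜ = cvs f X := by
    unfold cvs
    apply Finset.sum_congr rfl; intro u _
    apply Finset.sum_congr rfl; intro v _
    refine if_congr ?_ rfl rfl
    simp only [Finset.mem_compl]
    tauto
  have h1 := cvs_eq_two_cvv f hfs X
  have h2 := cvs_eq_two_cvv f hfs Xᶜ
  linarith

lemma cvv_submod (f : V → V → ℝ) (hf : ∀ u v, 0 ≤ f u v) (A B : Finset V) :
    cvv f (A ∩ B) + cvv f (A ∪ B) ≤ cvv f A + cvv f B := by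
  rw [cvv_eq_univ, cvv_eq_univ, cvv_eq_univ, cvv_eq_univ]
  rw [← Finset.sum_add_distrib, ← Finset.sum_add_distrib]
  apply Finset.sum_le_sum; intro u _
  rw [← Finset.sum_add_distrib, ← Finset.sum_add_distrib]
  apply Finset.sum_le_sum; intro v _
  have := hf u v
  by_cases hua : u ∈ A <;> by_cases hub : u ∈ B <;> by_cases hva : v ∈ A <;> by_cases hvb : v ∈ B <;>
    simp [hua, hub, hva, hvb] <;> linarith

def NsetD (S : Finset V) (Y : V → Finset V) (s : V) : Finset V := Y s \ (S.erase s).biUnion Y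
def degD (S : Finset V) (Y : V → Finset V) (w : V) : ℕ := (S.filter fun s => w ∈ Y s).card
def CsetD (S : Finset V) (Y : V → Finset V) (U : Finset V) (j : ℕ) : Finset V :=
  U.filter fun w => j ≤ degD S Y w

lemma mem_NsetD_iff (S : Finset V) (Y : V → Finset V) {s : V} (hs : s ∈ S) (u : V) :
    u ∈ NsetD S Y s ↔ (S.filter fun t => u ∈ Y t) = {s} := by
  unfold NsetD
  rw [Finset.mem_sdiff, Finset.mem_biUnion]
  constructor
  · rintro ⟨huY, hno⟩
    ext t
    simp only [Finset.mem_filter, Finset.mem_singleton]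
    constructor
    · rintro ⟨htS, htY⟩
      by_contra hne
      exact hno ⟨t, Finset.mem_erase.mpr ⟨hne, htS⟩, htY⟩
    · rintro rfl; exact ⟨hs, huY⟩
  · intro h
    have hsmem : s ∈ S.filter fun t => u ∈ Y t := by rw [h]; exact Finset.mem_singleton_self s
    refine ⟨(Finset.mem_filter.mp hsmem).2, ?_⟩
    rintro ⟨t, htE, htY⟩
    obtain ⟨hts, htS⟩ := Finset.mem_erase.mp htE
    have : t ∈ S.filter fun t => u ∈ Y t := Finset.mem_filter.mpr ⟨htS, htY⟩
    rw [h, Finset.mem_singleton] at this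
    exact hts this

lemma NsetD_subset (S : Finset V) (Y : V → Finset V) (s : V) : NsetD S Y s ⊆ Y s :=
  Finset.sdiff_subset

lemma Iu_empty_of_not_mem (S : Finset V) (Y : V → Finset V) (U : Finset V)
    (hYU : ∀ s ∈ S, Y s ⊆ U) {u : V} (hu : u ∉ U) :
    (S.filter fun t => u ∈ Y t) = ∅ := by
  apply Finset.filter_eq_empty_iff.mpr
  intro t ht htY
  exact hu (hYU t ht htY)

lemma degD_eq (S : Finset V) (Y : V → Finset V) (w : V) :
    degD S Y w = (S.filter fun t => w ∈ Y t).card := rfl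

lemma count_mixed (S : Finset V) (Y : V → Finset V) (U : Finset V)
    (hk : 2 ≤ S.card) (hYU : ∀ s ∈ S, Y s ⊆ U) {u v : V} (hu : u ∈ U) (hv : v ∉ U) :
    (S.filter fun s => ¬((u ∈ NsetD S Y s) ↔ (v ∈ NsetD S Y s))).card
    + ((Finset.Icc 3 S.card).filter fun j =>
        ¬((u ∈ U \ CsetD S Y U j) ↔ (v ∈ U \ CsetD S Y U j))).card
    ≤ (S.filter fun s => ¬((u ∈ U \ Y s) ↔ (v ∈ U \ Y s))).card := by
  classical
  set Iu := S.filter fun t => u ∈ Y t with hIu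
  have hIuS : Iu ⊆ S := Finset.filter_subset _ _
  set a := Iu.card with ha
  set k := S.card with hk'
  have hak : a ≤ k := Finset.card_le_card hIuS
  have hvU : ∀ W : Finset V, W ⊆ U → v ∉ W := fun W hW hvW => hv (hW hvW)
  -- L1 filter
  have hL1 : (S.filter fun s => ¬((u ∈ NsetD S Y s) ↔ (v ∈ NsetD S Y s)))
      = S.filter (fun s => Iu = {s}) := by
    apply Finset.filter_congr
    intro s hsS
    have hvn : v ∉ NsetD S Y s :=
      hvU _ ((NsetD_subset S Y s).trans (hYU s hsS))
    simp only [hvn, iff_false, not_not]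
    exact mem_NsetD_iff S Y hsS u
  -- L2 filter
  have hL2 : ((Finset.Icc 3 k).filter fun j =>
        ¬((u ∈ U \ CsetD S Y U j) ↔ (v ∈ U \ CsetD S Y U j)))
      = Finset.Ioc (max a 2) k := by
    ext j
    simp only [Finset.mem_filter, Finset.mem_sdiff, hu, hv, true_and, false_and, not_false_iff,
      and_true, iff_false, not_not, CsetD, Finset.mem_Icc, Finset.mem_Ioc, ← hIu, ← ha]
    simp only [degD, ← hIu, ← ha]
    omega
  -- R filter
  have hR : (S.filter fun s => ¬((u ∈ U \ Y s) ↔ (v ∈ U \ Y s))) = S \ Iu := by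
    have hmem : ∀ s, s ∈ Iu ↔ s ∈ S ∧ u ∈ Y s := fun s => by
      rw [hIu]; exact Finset.mem_filter
    ext s
    simp only [Finset.mem_filter, Finset.mem_sdiff, hu, hv, true_and, false_and, not_false_iff,
      and_true, iff_false, not_not, hmem]
    tauto
  rw [hL1, hL2, hR, Nat.card_Ioc, Finset.card_sdiff_of_subset hIuS, ← hk', ← ha]
  by_cases ha1 : a = 1
  · have hle : (S.filter (fun s => Iu = {s})).card ≤ 1 := by
      have hsub : S.filter (fun s => Iu = {s}) ⊆ Iu := by
        intro s hsmem
        have h := (Finset.mem_filter.mp hsmem).2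
        rw [h]; exact Finset.mem_singleton_self s
      calc (S.filter (fun s => Iu = {s})).card ≤ Iu.card := Finset.card_le_card hsub
        _ = 1 := ha1
    omega
  · have hempty : (S.filter (fun s => Iu = {s})) = ∅ := by
      apply Finset.filter_eq_empty_iff.mpr
      intro s _ heq
      exact ha1 (by rw [ha, heq, Finset.card_singleton])
    rw [hempty, Finset.card_empty]
    omega

lemma count_both (S : Finset V) (Y : V → Finset V) (U : Finset V)
    (hk : 2 ≤ S.card) (hYU : ∀ s ∈ S, Y s ⊆ U) {u v : V} (hu : u ∈ U) (hv : v ∈ U)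
    (hab : (S.filter fun t => u ∈ Y t).card ≤ (S.filter fun t => v ∈ Y t).card) :
    (S.filter fun s => ¬((u ∈ NsetD S Y s) ↔ (v ∈ NsetD S Y s))).card
    + ((Finset.Icc 3 S.card).filter fun j =>
        ¬((u ∈ U \ CsetD S Y U j) ↔ (v ∈ U \ CsetD S Y U j))).card
    ≤ (S.filter fun s => ¬((u ∈ U \ Y s) ↔ (v ∈ U \ Y s))).card := by
  classical
  set Iu := S.filter fun t => u ∈ Y t with hIu
  set Iv := S.filter fun t => v ∈ Y t with hIv
  have hIuS : Iu ⊆ S := Finset.filter_subset _ _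
  have hIvS : Iv ⊆ S := Finset.filter_subset _ _
  have hmemu : ∀ s, s ∈ Iu ↔ s ∈ S ∧ u ∈ Y s := fun s => by rw [hIu]; exact Finset.mem_filter
  have hmemv : ∀ s, s ∈ Iv ↔ s ∈ S ∧ v ∈ Y s := fun s => by rw [hIv]; exact Finset.mem_filter
  set a := Iu.card with ha
  set b := Iv.card with hb
  set k := S.card with hk'
  set D := (symmDiff Iu Iv).card with hD
  -- R filter
  have hR : (S.filter fun s => ¬((u ∈ U \ Y s) ↔ (v ∈ U \ Y s))) = symmDiff Iu Iv := by
    ext s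
    simp only [Finset.mem_filter, Finset.mem_sdiff, hu, hv, true_and, Finset.mem_symmDiff,
      hmemu, hmemv]
    tauto
  -- L2 bound
  have hL2 : ((Finset.Icc 3 k).filter fun j =>
        ¬((u ∈ U \ CsetD S Y U j) ↔ (v ∈ U \ CsetD S Y U j)))
      ⊆ Finset.Ioc (max a 2) b := by
    intro j hj
    simp only [Finset.mem_filter, Finset.mem_sdiff, hu, hv, true_and, CsetD,
      Finset.mem_filter, Finset.mem_Icc, ← hIu, ← hIv, ← ha, ← hb] at hj
    simp only [degD, ← hIu, ← hIv, ← ha, ← hb] at hj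
    simp only [Finset.mem_Ioc]
    omega
  have hL2c : ((Finset.Icc 3 k).filter fun j =>
        ¬((u ∈ U \ CsetD S Y U j) ↔ (v ∈ U \ CsetD S Y U j))).card ≤ b - max a 2 := by
    calc _ ≤ (Finset.Ioc (max a 2) b).card := Finset.card_le_card hL2
      _ = b - max a 2 := Nat.card_Ioc _ _
  -- L1 bound
  set A1 := Iu.filter (fun s => Iu = {s}) with hA1
  set B1 := Iv.filter (fun s => Iv = {s}) with hB1
  have hL1 : (S.filter fun s => ¬((u ∈ NsetD S Y s) ↔ (v ∈ NsetD S Y s))) ⊆ A1 ∪ B1 := by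
    intro s hsf
    obtain ⟨hsS, hcond⟩ := Finset.mem_filter.mp hsf
    rw [mem_NsetD_iff S Y hsS u, mem_NsetD_iff S Y hsS v, ← hIu, ← hIv] at hcond
    rw [Finset.mem_union]
    by_cases h1 : Iu = {s}
    · left
      refine Finset.mem_filter.mpr ⟨?_, h1⟩
      rw [h1]; exact Finset.mem_singleton_self s
    · right
      have h2 : Iv = {s} := by tauto
      refine Finset.mem_filter.mpr ⟨?_, h2⟩
      rw [h2]; exact Finset.mem_singleton_self s
  have hA1c : A1.card ≤ if a = 1 then 1 else 0 := by
    by_cases ha1 : a = 1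
    · simp only [ha1, if_true]
      calc A1.card ≤ Iu.card := Finset.card_le_card (Finset.filter_subset _ _)
        _ = 1 := ha1
    · simp only [ha1, if_false, Nat.le_zero, Finset.card_eq_zero]
      apply Finset.filter_eq_empty_iff.mpr
      intro s _ heq
      exact ha1 (by rw [ha, heq, Finset.card_singleton])
  have hB1c : B1.card ≤ if b = 1 then 1 else 0 := by
    by_cases hb1 : b = 1
    · simp only [hb1, if_true]
      calc B1.card ≤ Iv.card := Finset.card_le_card (Finset.filter_subset _ _)
        _ = 1 := hb1
    · simp only [hb1, if_false, Nat.le_zero, Finset.card_eq_zero]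
      apply Finset.filter_eq_empty_iff.mpr
      intro s _ heq
      exact hb1 (by rw [hb, heq, Finset.card_singleton])
  have hL1c : (S.filter fun s => ¬((u ∈ NsetD S Y s) ↔ (v ∈ NsetD S Y s))).card
      ≤ (if a = 1 then 1 else 0) + (if b = 1 then 1 else 0) := by
    calc _ ≤ (A1 ∪ B1).card := Finset.card_le_card hL1
      _ ≤ A1.card + B1.card := Finset.card_union_le _ _
      _ ≤ _ := Nat.add_le_add hA1c hB1c
  rw [hR]
  -- numeric facts
  have hF1 : b ≤ a + D := by
    have hsub : Iv ⊆ Iu ∪ symmDiff Iu Iv := by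
      intro s hs
      rw [Finset.mem_union, Finset.mem_symmDiff]
      by_cases h : s ∈ Iu
      · left; exact h
      · right; right; exact ⟨hs, h⟩
    calc b ≤ (Iu ∪ symmDiff Iu Iv).card := Finset.card_le_card hsub
      _ ≤ a + D := Finset.card_union_le _ _
  by_cases hEq : Iu = Iv
  · have hL1e : (S.filter fun s => ¬((u ∈ NsetD S Y s) ↔ (v ∈ NsetD S Y s))) = ∅ := by
      apply Finset.filter_eq_empty_iff.mpr
      intro s hsS hcond
      rw [mem_NsetD_iff S Y hsS u, mem_NsetD_iff S Y hsS v, ← hIu, ← hIv, hEq] at hcond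
      exact hcond Iff.rfl
    have hL2e : ((Finset.Icc 3 k).filter fun j =>
        ¬((u ∈ U \ CsetD S Y U j) ↔ (v ∈ U \ CsetD S Y U j))) = ∅ := by
      have hdeg : degD S Y u = degD S Y v := by
        simp only [degD, ← hIu, ← hIv, hEq]
      apply Finset.filter_eq_empty_iff.mpr
      intro j _ hcond
      apply hcond
      simp only [Finset.mem_sdiff, CsetD, Finset.mem_filter, hu, hv, true_and, hdeg]
    rw [hL1e, hL2e]
    simp
  -- Iu ≠ Iv
  have hF2 : a = 1 → b = 1 → D = 2 := by
    intro ha1 hb1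
    obtain ⟨x, hx⟩ := Finset.card_eq_one.mp (ha ▸ ha1)
    obtain ⟨y, hy⟩ := Finset.card_eq_one.mp (hb ▸ hb1)
    have hxy : x ≠ y := by
      intro h; apply hEq; rw [hx, hy, h]
    have : symmDiff Iu Iv = {x, y} := by
      rw [hx, hy]
      ext z
      simp only [Finset.mem_symmDiff, Finset.mem_singleton, Finset.mem_insert]
      constructor
      · rintro (⟨rfl, _⟩ | ⟨rfl, _⟩) <;> tauto
      · rintro (rfl | rfl)
        · left; exact ⟨rfl, fun h => hxy h⟩
        · right; exact ⟨rfl, fun h => hxy h.symm⟩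
    rw [hD, this, Finset.card_insert_of_notMem (by simp [hxy]), Finset.card_singleton]
  have hF3 : a = 0 → D = b := by
    intro ha0
    have hIue : Iu = ∅ := Finset.card_eq_zero.mp (ha ▸ ha0)
    rw [hD, hIue, hb]
    congr 1
    ext z
    simp [Finset.mem_symmDiff]
  by_cases ha1 : a = 1 <;> by_cases hb1 : b = 1
  · have hD2 := hF2 ha1 hb1
    simp only [ha1, hb1, if_true] at hL1c ⊢
    omega
  · simp only [ha1, hb1, if_true, if_false] at hL1c ⊢
    omega
  · have ha0 : a = 0 := by omega
    have hDb := hF3 ha0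
    simp only [ha1, hb1, if_true, if_false] at hL1c ⊢
    omega
  · by_cases ha0 : a = 0
    · have hDb := hF3 ha0
      simp only [ha1, hb1, if_false] at hL1c ⊢
      omega
    · simp only [ha1, hb1, if_false] at hL1c ⊢
      omega

lemma count_key (S : Finset V) (Y : V → Finset V) (U : Finset V)
    (hk : 2 ≤ S.card) (hYU : ∀ s ∈ S, Y s ⊆ U) (u v : V) :
    (S.filter fun s => ¬((u ∈ NsetD S Y s) ↔ (v ∈ NsetD S Y s))).card
    + ((Finset.Icc 3 S.card).filter fun j =>
        ¬((u ∈ U \ CsetD S Y U j) ↔ (v ∈ U \ CsetD S Y U j))).card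
    ≤ (S.filter fun s => ¬((u ∈ U \ Y s) ↔ (v ∈ U \ Y s))).card := by
  classical
  have hswapV : ∀ (T : Finset V) (X : V → Finset V),
      (T.filter (fun s => ¬((u ∈ X s) ↔ (v ∈ X s)))) =
      (T.filter (fun s => ¬((v ∈ X s) ↔ (u ∈ X s)))) := by
    intro T X
    apply Finset.filter_congr
    intro s _
    constructor <;> intro h <;> tauto
  have hswapN : ∀ (T : Finset ℕ) (X : ℕ → Finset V),
      (T.filter (fun j => ¬((u ∈ X j) ↔ (v ∈ X j)))) =
      (T.filter (fun j => ¬((v ∈ X j) ↔ (u ∈ X j)))) := by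
    intro T X
    apply Finset.filter_congr
    intro j _
    constructor <;> intro h <;> tauto
  by_cases hu : u ∈ U <;> by_cases hv : v ∈ U
  · rcases le_total ((S.filter fun t => u ∈ Y t).card) ((S.filter fun t => v ∈ Y t).card)
      with h | h
    · exact count_both S Y U hk hYU hu hv h
    · rw [hswapV S (fun s => NsetD S Y s), hswapN (Finset.Icc 3 S.card) (fun j => U \ CsetD S Y U j),
        hswapV S (fun s => U \ Y s)]
      exact count_both S Y U hk hYU hv hu h
  · exact count_mixed S Y U hk hYU hu hv
  · rw [hswapV S (fun s => NsetD S Y s), hswapN (Finset.Icc 3 S.card) (fun j => U \ CsetD S Y U j),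
      hswapV S (fun s => U \ Y s)]
    exact count_mixed S Y U hk hYU hv hu
  · have h1 : (S.filter fun s => ¬((u ∈ NsetD S Y s) ↔ (v ∈ NsetD S Y s))) = ∅ := by
      apply Finset.filter_eq_empty_iff.mpr
      intro s hsS hcond
      apply hcond
      have h1 : u ∉ NsetD S Y s := fun h => hu (hYU s hsS (Finset.sdiff_subset h))
      have h2 : v ∉ NsetD S Y s := fun h => hv (hYU s hsS (Finset.sdiff_subset h))
      tauto
    have h2 : ((Finset.Icc 3 S.card).filter fun j =>
        ¬((u ∈ U \ CsetD S Y U j) ↔ (v ∈ U \ CsetD S Y U j))) = ∅ := by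
      apply Finset.filter_eq_empty_iff.mpr
      intro j _ hcond
      apply hcond
      have h1 : u ∉ U \ CsetD S Y U j := fun h => hu (Finset.sdiff_subset h)
      have h2 : v ∉ U \ CsetD S Y U j := fun h => hv (Finset.sdiff_subset h)
      tauto
    rw [h1, h2]
    simp

lemma cvs_sum_swap {κ : Type*} (f : V → V → ℝ) (T : Finset κ) (X : κ → Finset V) :
    (∑ s ∈ T, cvs f (X s))
      = ∑ u, ∑ v, ∑ s ∈ T, (if ¬((u ∈ X s) ↔ (v ∈ X s)) then f u v else 0) := by
  unfold cvs
  rw [Finset.sum_comm]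
  apply Finset.sum_congr rfl
  intro u _
  rw [Finset.sum_comm]

lemma inner_count (f : V → V → ℝ) (u v : V) {κ : Type*} [DecidableEq κ]
    (T : Finset κ) (X : κ → Finset V) :
    (∑ s ∈ T, (if ¬((u ∈ X s) ↔ (v ∈ X s)) then f u v else 0))
      = ((T.filter fun s => ¬((u ∈ X s) ↔ (v ∈ X s))).card : ℝ) * f u v := by
  classical
  rw [← Finset.sum_filter, Finset.sum_const, nsmul_eq_mul]

lemma diamond (f : V → V → ℝ) (hf0 : ∀ u v, 0 ≤ f u v)
    (S : Finset V) (Y : V → Finset V) (U : Finset V)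
    (hk : 2 ≤ S.card) (hYU : ∀ s ∈ S, Y s ⊆ U) :
    (∑ s ∈ S, cvs f (NsetD S Y s))
      + (∑ j ∈ Finset.Icc 3 S.card, cvs f (U \ CsetD S Y U j))
    ≤ ∑ s ∈ S, cvs f (U \ Y s) := by
  classical
  rw [cvs_sum_swap f S (fun s => NsetD S Y s),
    cvs_sum_swap f (Finset.Icc 3 S.card) (fun j => U \ CsetD S Y U j),
    cvs_sum_swap f S (fun s => U \ Y s)]
  rw [← Finset.sum_add_distrib]
  apply Finset.sum_le_sum
  intro u _
  rw [← Finset.sum_add_distrib]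
  apply Finset.sum_le_sum
  intro v _
  rw [inner_count, inner_count, inner_count, ← add_mul]
  apply mul_le_mul_of_nonneg_right _ (hf0 u v)
  rw [← Nat.cast_add]
  exact_mod_cast count_key S Y U hk hYU u v

lemma exists_good_transversal (f : V → V → ℝ) (hf0 : ∀ u v, 0 ≤ f u v)
    (hfs : ∀ u v, f u v = f v u)
    (A : Finset V) (hA : A.Nonempty) (hAp : A ≠ Finset.univ) (lam : ℝ)
    (hlow : ∀ W : Finset V, W.Nonempty → W ≠ Finset.univ → lam ≤ cvv f W) :
    ∃ S : Finset V, S ⊆ A ∧ S.Nonempty ∧ (S.card : ℝ) * lam ≤ 2 * cvv f A ∧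
      (∀ W : Finset V, W ⊆ A → W.Nonempty → W ∩ S = ∅ → cvv f A < cvv f (A \ W)) := by
  classical
  set P : Finset V → Prop := fun S => S ⊆ A ∧
    ∀ W : Finset V, W ⊆ A → W.Nonempty → cvv f (A \ W) ≤ cvv f A → (W ∩ S).Nonempty with hP
  have hPA : P A := by
    refine ⟨Finset.Subset.refl A, fun W hWA hWne _ => ?_⟩
    rwa [Finset.inter_eq_left.mpr hWA]
  set 𝒯 : Finset (Finset V) := Finset.univ.filter P with h𝒯
  have h𝒯ne : 𝒯.Nonempty := ⟨A, Finset.mem_filter.mpr ⟨Finset.mem_univ _, hPA⟩⟩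
  obtain ⟨S, hS𝒯, hSmin⟩ := Finset.exists_min_image 𝒯 Finset.card h𝒯ne
  have hPS : P S := (Finset.mem_filter.mp hS𝒯).2
  obtain ⟨hSsub, hhit⟩ := hPS
  -- S nonempty
  have hSne : S.Nonempty := by
    have h1 : (A ∩ S).Nonempty := by
      apply hhit A (Finset.Subset.refl A) hA
      rw [Finset.sdiff_self, cvv_empty]
      exact cvv_nonneg f hf0 A
    exact h1.mono Finset.inter_subset_right
  -- strict property
  have hstrict : ∀ W : Finset V, W ⊆ A → W.Nonempty → W ∩ S = ∅ →
      cvv f A < cvv f (A \ W) := by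
    intro W hWA hWne hWS
    by_contra hcon
    push_neg at hcon
    have := hhit W hWA hWne hcon
    rw [hWS] at this
    exact Finset.not_nonempty_empty this
  refine ⟨S, hSsub, hSne, ?_, hstrict⟩
  -- cardinality bound
  set k := S.card with hk'
  have hk1 : 1 ≤ k := Finset.card_pos.mpr hSne
  by_cases hk2 : 2 ≤ k
  · -- witnesses
    have hwit : ∀ s : V, ∃ W : Finset V, s ∈ S →
        (W ⊆ A ∧ W.Nonempty ∧ cvv f (A \ W) ≤ cvv f A ∧ W ∩ S = {s}) := by
      intro s
      by_cases hs : s ∈ S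
      · have hePnot : ¬ P (S.erase s) := by
          intro hPe
          have hmem : S.erase s ∈ 𝒯 := Finset.mem_filter.mpr ⟨Finset.mem_univ _, hPe⟩
          have hle := hSmin _ hmem
          have hlt : (S.erase s).card < S.card := Finset.card_erase_lt_of_mem hs
          omega
        have heA : S.erase s ⊆ A := (Finset.erase_subset s S).trans hSsub
        simp only [hP] at hePnot
        push_neg at hePnot
        obtain ⟨W, hWA, hWne, hWle, hWint⟩ := hePnot heA
        have hWS : (W ∩ S).Nonempty := hhit W hWA hWne hWle
        have hsub : W ∩ S ⊆ {s} := by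
          intro x hx
          rw [Finset.mem_singleton]
          by_contra hxs
          obtain ⟨hxW, hxS⟩ := Finset.mem_inter.mp hx
          have : x ∈ W ∩ S.erase s :=
            Finset.mem_inter.mpr ⟨hxW, Finset.mem_erase.mpr ⟨hxs, hxS⟩⟩
          rw [hWint] at this
          exact Finset.notMem_empty x this
        have heq : W ∩ S = {s} := by
          rcases Finset.subset_singleton_iff.mp hsub with h | h
          · rw [h] at hWS; exact absurd hWS Finset.not_nonempty_empty
          · exact h
        exact ⟨W, fun _ => ⟨hWA, hWne, hWle, heq⟩⟩
      · exact ⟨∅, fun h => absurd h hs⟩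
    choose Yf hYf using hwit
    have hYA : ∀ s ∈ S, Yf s ⊆ A := fun s hs => (hYf s hs).1
    have hYbad : ∀ s ∈ S, cvv f (A \ Yf s) ≤ cvv f A := fun s hs => (hYf s hs).2.2.1
    have hYS : ∀ s ∈ S, Yf s ∩ S = {s} := fun s hs => (hYf s hs).2.2.2
    have hsY : ∀ s ∈ S, s ∈ Yf s := by
      intro s hs
      have : s ∈ Yf s ∩ S := by rw [hYS s hs]; exact Finset.mem_singleton_self s
      exact (Finset.mem_inter.mp this).1
    have hsY' : ∀ s ∈ S, ∀ t ∈ S, s ∈ Yf t → s = t := by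
      intro s hs t ht hst
      have : s ∈ Yf t ∩ S := Finset.mem_inter.mpr ⟨hst, hs⟩
      rw [hYS t ht] at this
      exact Finset.mem_singleton.mp this
    -- N s nonempty and proper
    have hNmem : ∀ s ∈ S, s ∈ NsetD S Yf s := by
      intro s hs
      rw [NsetD, Finset.mem_sdiff]
      refine ⟨hsY s hs, ?_⟩
      rw [Finset.mem_biUnion]
      rintro ⟨t, htE, hstY⟩
      obtain ⟨hts, htS⟩ := Finset.mem_erase.mp htE
      exact hts ((hsY' s hs t htS hstY).symm)
    have hNlam : ∀ s ∈ S, lam ≤ cvv f (NsetD S Yf s) := by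
      intro s hs
      apply hlow _ ⟨s, hNmem s hs⟩
      intro hEq
      apply hAp
      apply Finset.univ_subset_iff.mp
      rw [← hEq]
      exact Finset.sdiff_subset.trans (hYA s hs)
    -- C j : disjoint from S, so A < A \ C j weakly
    have hCS : ∀ j, 3 ≤ j → CsetD S Yf A j ∩ S = ∅ := by
      intro j hj
      rw [Finset.eq_empty_iff_forall_notMem]
      intro s hsmem
      obtain ⟨hsC, hsS⟩ := Finset.mem_inter.mp hsmem
      obtain ⟨-, hdeg⟩ := Finset.mem_filter.mp hsC
      have hfil : (S.filter fun t => s ∈ Yf t) = {s} := by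
        ext t
        simp only [Finset.mem_filter, Finset.mem_singleton]
        constructor
        · rintro ⟨htS, hstY⟩; exact (hsY' s hsS t htS hstY).symm
        · intro h; rw [h]; exact ⟨hsS, hsY s hsS⟩
      rw [degD, hfil, Finset.card_singleton] at hdeg
      omega
    have hCge : ∀ j ∈ Finset.Icc 3 k, cvv f A ≤ cvv f (A \ CsetD S Yf A j) := by
      intro j hj
      have hj3 : 3 ≤ j := (Finset.mem_Icc.mp hj).1
      rcases Finset.eq_empty_or_nonempty (CsetD S Yf A j) with hCe | hCne
      · rw [hCe, Finset.sdiff_empty]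
      · exact le_of_lt (hstrict _ (Finset.filter_subset _ _) hCne (hCS j hj3))
    -- apply diamond
    have hdia := diamond f hf0 S Yf A hk2 hYA
    have e1 : (∑ s ∈ S, cvs f (NsetD S Yf s)) = 2 * ∑ s ∈ S, cvv f (NsetD S Yf s) := by
      rw [Finset.mul_sum]
      exact Finset.sum_congr rfl fun s _ => cvs_eq_two_cvv f hfs _
    have e2 : (∑ j ∈ Finset.Icc 3 k, cvs f (A \ CsetD S Yf A j))
        = 2 * ∑ j ∈ Finset.Icc 3 k, cvv f (A \ CsetD S Yf A j) := by
      rw [Finset.mul_sum]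
      exact Finset.sum_congr rfl fun j _ => cvs_eq_two_cvv f hfs _
    have e3 : (∑ s ∈ S, cvs f (A \ Yf s)) = 2 * ∑ s ∈ S, cvv f (A \ Yf s) := by
      rw [Finset.mul_sum]
      exact Finset.sum_congr rfl fun s _ => cvs_eq_two_cvv f hfs _
    rw [e1, e2, e3] at hdia
    have i1 : (k : ℝ) * lam ≤ ∑ s ∈ S, cvv f (NsetD S Yf s) := by
      calc (k : ℝ) * lam = ∑ _s ∈ S, lam := by rw [Finset.sum_const, nsmul_eq_mul, hk']
        _ ≤ _ := Finset.sum_le_sum hNlam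
    have i2 : ((k : ℝ) - 2) * cvv f A ≤ ∑ j ∈ Finset.Icc 3 k, cvv f (A \ CsetD S Yf A j) := by
      have hcard : (Finset.Icc 3 k).card = k - 2 := by
        rw [Nat.card_Icc]; omega
      calc ((k : ℝ) - 2) * cvv f A = ∑ _j ∈ Finset.Icc 3 k, cvv f A := by
            rw [Finset.sum_const, nsmul_eq_mul, hcard]
            congr 1
            have : ((k - 2 : ℕ) : ℝ) = (k : ℝ) - 2 := by
              rw [Nat.cast_sub hk2]; norm_num
            rw [this]
        _ ≤ _ := Finset.sum_le_sum hCge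
    have i3 : (∑ s ∈ S, cvv f (A \ Yf s)) ≤ (k : ℝ) * cvv f A := by
      calc (∑ s ∈ S, cvv f (A \ Yf s)) ≤ ∑ _s ∈ S, cvv f A := Finset.sum_le_sum hYbad
        _ = (k : ℝ) * cvv f A := by rw [Finset.sum_const, nsmul_eq_mul, hk']
    nlinarith [hdia, i1, i2, i3]
  · -- k = 1
    have hkeq : k = 1 := by omega
    rw [hkeq]
    have h1 : lam ≤ cvv f A := hlow A hA hAp
    have h2 : 0 ≤ cvv f A := cvv_nonneg f hf0 A
    push_cast
    linarith

lemma crossing_aux (G : SimpleGraph V) (W : Finset V) {b : V} (hb : b ∉ W) :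
    ∀ (x : V) (p : G.Walk x b), x ∈ W → ∃ u v, u ∈ W ∧ v ∉ W ∧ G.Adj u v := by
  intro x p
  induction p with
  | nil => exact fun hx => absurd hx hb
  | @cons u' v' w' hadj q ih =>
    intro hx
    by_cases hy : v' ∈ W
    · exact ih hb hy
    · exact ⟨u', v', hx, hy, hadj⟩

lemma exists_crossing_edge (G : SimpleGraph V) (hG : G.Connected) (W : Finset V)
    (hne : W.Nonempty) (hp : W ≠ Finset.univ) :
    ∃ u v, u ∈ W ∧ v ∉ W ∧ G.Adj u v := by
  obtain ⟨a, ha⟩ := hne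
  have hb : ∃ b, b ∉ W := by
    by_contra hcon
    push_neg at hcon
    exact hp (Finset.eq_univ_iff_forall.mpr hcon)
  obtain ⟨b, hb⟩ := hb
  obtain ⟨p⟩ := hG.preconnected a b
  exact crossing_aux G W hb a p ha


end ApproxCutAux

/-- Every α-approximate minimum cut of a connected graph is the unique minimum
(S,T)-terminal cut for some S, T of size at most ⌊2α⌋+1. -/
theorem approx_min_cut_unique_ST_terminal_cut
    (G : SimpleGraph V) (hG : G.Connected)
    (c : V → V → ℝ) (hc : ∀ u v, G.Adj u v → 0 < c u v) (hcsymm : ∀ u v, c u v = c v u)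
    (α : ℝ) (hα : 1 ≤ α) (lam : ℝ)
    (hlam : IsLeast {x : ℝ | ∃ W : Finset V, W.Nonempty ∧ W ≠ Finset.univ ∧ cutVal G c W = x} lam)
    (U : Finset V) (hUne : U.Nonempty) (hUp : U ≠ Finset.univ)
    (happrox : cutVal G c U ≤ α * lam) :
    ∃ S T : Finset V, S.Nonempty ∧ T.Nonempty ∧
      S.card ≤ ⌊2 * α⌋₊ + 1 ∧ T.card ≤ ⌊2 * α⌋₊ + 1 ∧
      IsUniqueMinTerminalCut G c S T U := by
  classical
  set f : V → V → ℝ := fun u v => @ite ℝ (G.Adj u v) (Classical.propDecidable _) (c u v) 0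
    with hf
  have hf0 : ∀ u v, 0 ≤ f u v := by
    intro u v
    rw [hf]
    dsimp only
    split
    · exact le_of_lt (hc u v ‹_›)
    · exact le_refl 0
  have hfs : ∀ u v, f u v = f v u := by
    intro u v
    rw [hf]
    dsimp only
    by_cases h : G.Adj u v
    · rw [if_pos h, if_pos h.symm, hcsymm]
    · rw [if_neg h, if_neg (fun hh => h hh.symm)]
  have hcv : ∀ X : Finset V, cutVal G c X = cvv f X := fun X => rfl
  have hlow : ∀ W : Finset V, W.Nonempty → W ≠ Finset.univ → lam ≤ cvv f W := by
    intro W h1 h2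
    exact hlam.2 ⟨W, h1, h2, (hcv W).symm⟩
  have hlampos : 0 < lam := by
    obtain ⟨W0, hW0ne, hW0p, hW0eq⟩ := hlam.1
    obtain ⟨u0, v0, hu0, hv0, hadj⟩ := exists_crossing_edge G hG W0 hW0ne hW0p
    have hpos : 0 < f u0 v0 := by
      rw [hf]
      dsimp only
      rw [if_pos hadj]
      exact hc u0 v0 hadj
    have hle : f u0 v0 ≤ cvv f W0 := by
      unfold cvv
      calc f u0 v0 ≤ ∑ v ∈ W0ᶜ, f u0 v := by
            apply Finset.single_le_sum (fun v _ => hf0 u0 v)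
            exact Finset.mem_compl.mpr hv0
        _ ≤ ∑ u ∈ W0, ∑ v ∈ W0ᶜ, f u v := by
            apply Finset.single_le_sum
              (fun u _ => Finset.sum_nonneg (fun v _ => hf0 u v)) hu0
    rw [← hcv] at hle
    rw [hW0eq] at hle
    linarith
  -- transversals
  obtain ⟨S, hSU, hSne, hScard, hSstrict⟩ :=
    exists_good_transversal f hf0 hfs U hUne hUp lam hlow
  have hUcne : Uᶜ.Nonempty := by
    rw [Finset.nonempty_iff_ne_empty]
    intro h
    exact hUp (by rwa [Finset.compl_eq_empty_iff] at h)
  have hUcp : Uᶜ ≠ Finset.univ := by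
    intro h
    rw [Finset.compl_eq_univ_iff] at h
    exact Finset.nonempty_iff_ne_empty.mp hUne h
  obtain ⟨T, hTUc, hTne, hTcard, hTstrict⟩ :=
    exists_good_transversal f hf0 hfs Uᶜ hUcne hUcp lam hlow
  have hcompl : cvv f Uᶜ = cvv f U := cvv_compl f hfs U
  -- cardinality bounds
  have hUcut : cvv f U ≤ α * lam := by rw [← hcv]; exact happrox
  have hcard2 : ∀ n : ℕ, (n : ℝ) * lam ≤ 2 * cvv f U → n ≤ ⌊2 * α⌋₊ + 1 := by
    intro n hn
    have h1 : (n : ℝ) * lam ≤ (2 * α) * lam := by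
      calc (n : ℝ) * lam ≤ 2 * cvv f U := hn
        _ ≤ 2 * (α * lam) := by linarith
        _ = (2 * α) * lam := by ring
    have h2 : (n : ℝ) ≤ 2 * α := le_of_mul_le_mul_right h1 hlampos
    have h3 : n ≤ ⌊2 * α⌋₊ := Nat.le_floor h2
    omega
  refine ⟨S, T, hSne, hTne, hcard2 S.card hScard, hcard2 T.card (by rwa [hcompl] at hTcard), ?_⟩
  -- key strictness
  have hkey : ∀ X : Finset V, IsTerminalCut S T X → X ≠ U → cvv f U < cvv f X := by
    intro X ⟨hSX, hXTc⟩ hne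
    set A := U \ X with hA
    set B := X \ U with hB
    have hAS : A ∩ S = ∅ := by
      rw [Finset.eq_empty_iff_forall_notMem]
      intro x hx
      obtain ⟨hxA, hxS⟩ := Finset.mem_inter.mp hx
      exact (Finset.mem_sdiff.mp hxA).2 (hSX hxS)
    have hBT : B ∩ T = ∅ := by
      rw [Finset.eq_empty_iff_forall_notMem]
      intro x hx
      obtain ⟨hxB, hxT⟩ := Finset.mem_inter.mp hx
      exact Finset.mem_compl.mp (hXTc (Finset.mem_sdiff.mp hxB).1) hxT
    have hBUc : B ⊆ Uᶜ := by
      intro x hx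
      exact Finset.mem_compl.mpr (Finset.mem_sdiff.mp hx).2
    have hXcap : X ∩ U = U \ A := by
      ext x
      simp only [Finset.mem_inter, Finset.mem_sdiff, hA]
      tauto
    have hXcup : (X ∪ U)ᶜ = Uᶜ \ B := by
      ext x
      simp only [Finset.mem_compl, Finset.mem_union, Finset.mem_sdiff, hB]
      tauto
    rcases Finset.eq_empty_or_nonempty A with hAe | hAne <;>
      rcases Finset.eq_empty_or_nonempty B with hBe | hBne
    · exfalso
      apply hne
      apply Finset.Subset.antisymm
      · rw [← Finset.sdiff_eq_empty_iff_subset]; exact hBe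
      · rw [← Finset.sdiff_eq_empty_iff_subset]; exact hAe
    · -- A empty, B nonempty : U ⊆ X
      have hUX : U ⊆ X := by rw [← Finset.sdiff_eq_empty_iff_subset]; exact hAe
      have hXc : Xᶜ = Uᶜ \ B := by
        ext x
        simp only [Finset.mem_compl, Finset.mem_sdiff, hB]
        constructor
        · intro hx
          exact ⟨fun hxU => hx (hUX hxU), fun ⟨hxX, _⟩ => hx hxX⟩
        · rintro ⟨hxU, hxn⟩ hxX
          exact hxn ⟨hxX, hxU⟩
      have := hTstrict B hBUc hBne hBT
      rw [← hXc] at this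
      rw [cvv_compl f hfs X] at this
      linarith [hcompl]
    · -- B empty, A nonempty : X ⊆ U
      have hXU : X ⊆ U := by rw [← Finset.sdiff_eq_empty_iff_subset]; exact hBe
      have hXeq : X = U \ A := by
        rw [← hXcap]
        exact (Finset.inter_eq_left.mpr hXU).symm
      have := hSstrict A Finset.sdiff_subset hAne hAS
      rw [← hXeq] at this
      exact this
    · -- both nonempty
      have h1 : cvv f U < cvv f (X ∩ U) := by
        rw [hXcap]
        exact hSstrict A Finset.sdiff_subset hAne hAS
      have h2 : cvv f U < cvv f (X ∪ U) := by
        rw [← cvv_compl f hfs (X ∪ U), hXcup]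
        calc cvv f U = cvv f Uᶜ := hcompl.symm
          _ < cvv f (Uᶜ \ B) := hTstrict B hBUc hBne hBT
      have h3 := cvv_submod f hf0 X U
      linarith
  -- assemble
  have hUterm : IsTerminalCut S T U := by
    refine ⟨hSU, ?_⟩
    intro x hxU
    rw [Finset.mem_compl]
    intro hxT
    exact Finset.mem_compl.mp (hTUc hxT) hxU
  have hmin : IsMinTerminalCut G c S T U := by
    refine ⟨hUterm, ?_⟩
    intro Z hZ
    by_cases h : Z = U
    · rw [h]
    · rw [hcv, hcv]
      exact le_of_lt (hkey Z hZ h)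
  refine ⟨hmin, ?_⟩
  intro Z hZmin
  by_contra hne
  have h1 : cvv f U < cvv f Z := hkey Z hZmin.1 hne
  have h2 : cutVal G c Z ≤ cutVal G c U := hZmin.2 U hUterm
  rw [hcv, hcv] at h2
  linarith
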